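/- Let X be a nonempty compact topological space, Λ₀ > 0, and u : X × [0, Λ₀] → ℝ a continuous function such that for every x ∈ X the map λ ↦ u(x, λ) is differentiable, with partial derivative ∂_λ u continuous on X × [0, Λ₀]. Suppose there is a constant C such that ∂_λ u(x, λ) ≤ C whenever (x, λ) satisfies u(x, λ) = max_{y ∈ X} u(y, λ). Then for all (x, λ) ∈ X × [0, Λ₀], u(x, λ) ≤ max_{y ∈ X} u(y, 0) + C·λ. -/

import Mathlib

open Set

/-- MVT-style one-sided bound: if `f'` is bounded above by `K` on the open interval,
then `f b ≤ f a + K * (b - a)`. -/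
private lemma aux_deriv_bound {f f' : ℝ → ℝ} {a b K : ℝ} (hab : a ≤ b)
    (hd : ∀ ξ ∈ Set.Icc a b, HasDerivWithinAt f (f' ξ) (Set.Icc a b) ξ)
    (hK : ∀ ξ ∈ Set.Ioo a b, f' ξ ≤ K) : f b ≤ f a + K * (b - a) := by
  have hcont : ContinuousOn f (Set.Icc a b) := fun ξ hξ => (hd ξ hξ).continuousWithinAt
  have hgd : ∀ ξ ∈ Set.Ioo a b, HasDerivAt (fun t => K * t - f t) (K - f' ξ) ξ := by
    intro ξ hξ
    have hf : HasDerivAt f (f' ξ) ξ :=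
      (hd ξ (Set.Ioo_subset_Icc_self hξ)).hasDerivAt (Icc_mem_nhds hξ.1 hξ.2)
    exact (((hasDerivAt_id' ξ).const_mul K).sub hf).congr_deriv (by ring)
  have hmono : MonotoneOn (fun t => K * t - f t) (Set.Icc a b) := by
    apply monotoneOn_of_deriv_nonneg (convex_Icc a b)
    · exact ((continuous_const.mul continuous_id).continuousOn).sub hcont
    · rw [interior_Icc]
      exact fun ξ hξ => ((hgd ξ hξ).differentiableAt).differentiableWithinAt
    · rw [interior_Icc]
      intro ξ hξ
      rw [(hgd ξ hξ).deriv]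
      linarith [hK ξ hξ]
  have := hmono (Set.left_mem_Icc.2 hab) (Set.right_mem_Icc.2 hab) hab
  simp only at this
  linarith

/-- Maximum-principle lemma ('Hamilton trick') underlying Theorem 4 of the paper:
if `u : X × [0, Λ₀] → ℝ` is continuous on a nonempty compact space `X`, differentiable in
the second variable with continuous partial derivative `u'`, and `u' ≤ C` at every spatial
maximum point of `u`, then `u(x, λ) ≤ max_y u(y, 0) + C·λ`. -/
theorem stmt_2 (X : Type*) [TopologicalSpace X] [CompactSpace X] [Nonempty X]
    (Λ₀ : ℝ) (hΛ₀ : 0 < Λ₀) (u u' : X → ℝ → ℝ) (C : ℝ)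
    (hu_cont : ContinuousOn (fun p : X × ℝ => u p.1 p.2) (univ ×ˢ Icc 0 Λ₀))
    (hderiv : ∀ x : X, ∀ lam ∈ Icc (0 : ℝ) Λ₀,
      HasDerivWithinAt (u x) (u' x lam) (Icc (0 : ℝ) Λ₀) lam)
    (hu'_cont : ContinuousOn (fun p : X × ℝ => u' p.1 p.2) (univ ×ˢ Icc 0 Λ₀))
    (hC : ∀ x : X, ∀ lam ∈ Icc (0 : ℝ) Λ₀,
      (∀ y : X, u y lam ≤ u x lam) → u' x lam ≤ C) :
    ∀ x : X, ∀ lam ∈ Icc (0 : ℝ) Λ₀, u x lam ≤ (⨆ y : X, u y 0) + C * lam := by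
  set M0 : ℝ := ⨆ y : X, u y 0 with hM0def
  have hK : IsCompact ((univ : Set X) ×ˢ Icc (0 : ℝ) Λ₀) :=
    isCompact_univ.prod isCompact_Icc
  -- continuity of each time-slice x ↦ u x lam
  have hslice : ∀ lam ∈ Icc (0 : ℝ) Λ₀, Continuous fun x => u x lam := by
    intro lam hlam
    exact hu_cont.comp_continuous (continuous_id.prodMk continuous_const)
      (fun x => ⟨mem_univ x, hlam⟩)
  -- continuity in lam of each fiber
  have hfiber : ∀ x, ContinuousOn (u x) (Icc (0 : ℝ) Λ₀) :=
    fun x ξ hξ => (hderiv x ξ hξ).continuousWithinAt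
  -- u x 0 ≤ M0
  have hM0 : ∀ x, u x 0 ≤ M0 := by
    intro x
    have hb : BddAbove (range fun y => u y 0) := by
      have := (isCompact_univ.image_of_continuousOn
        ((hslice 0 ⟨le_refl 0, hΛ₀.le⟩).continuousOn)).bddAbove
      rwa [image_univ] at this
    exact le_ciSup hb x
  -- global bound on u'
  obtain ⟨L, hL⟩ : ∃ L, ∀ x, ∀ ξ ∈ Icc (0 : ℝ) Λ₀, |u' x ξ| ≤ L := by
    obtain ⟨L, hL⟩ := hK.exists_bound_of_continuousOn hu'_cont
    exact ⟨L, fun x ξ hξ => by simpa using hL (x, ξ) ⟨mem_univ x, hξ⟩⟩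
  -- main step: for every ε > 0 the bound with C + ε holds
  have key : ∀ ε : ℝ, 0 < ε → ∀ lam ∈ Icc (0 : ℝ) Λ₀, ∀ x, u x lam ≤ M0 + (C + ε) * lam := by
    intro ε hε
    set s : Set ℝ := {lam | ∀ x, u x lam ≤ M0 + (C + ε) * lam} with hsdef
    -- the "good" set is closed within Icc
    have hclosed : IsClosed (s ∩ Icc 0 Λ₀) := by
      have : s ∩ Icc 0 Λ₀ = ⋂ x : X, (Icc (0:ℝ) Λ₀ ∩
          (fun lam => u x lam - (C + ε) * lam) ⁻¹' Iic M0) := by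
        ext lam
        simp only [mem_inter_iff, mem_iInter, mem_setOf_eq, mem_preimage, mem_Iic, hsdef]
        constructor
        · rintro ⟨h1, h2⟩ x; exact ⟨h2, by linarith [h1 x]⟩
        · intro h
          refine ⟨fun x => by linarith [(h x).2], (h (Classical.arbitrary X)).1⟩
      rw [this]
      refine isClosed_iInter fun x => ?_
      exact ((hfiber x).sub ((continuous_const.mul continuous_id).continuousOn)
        ).preimage_isClosed_of_isClosed isClosed_Icc isClosed_Iic
    have h0 : (0 : ℝ) ∈ s := by
      intro x; simpa using hM0 x
    -- the induction step
    have hgt : ∀ m ∈ s ∩ Ico (0:ℝ) Λ₀, ∀ y ∈ Ioi m, (s ∩ Ioc m y).Nonempty := by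
      rintro m ⟨hms, hm0, hmΛ⟩ y hy
      -- max of u(·, m)
      obtain ⟨xm, -, hxm⟩ := isCompact_univ.exists_isMaxOn univ_nonempty
        ((hslice m ⟨hm0, hmΛ.le⟩).continuousOn)
      set Mm : ℝ := u xm m with hMmdef
      have hMm : ∀ z, u z m ≤ Mm := fun z => hxm (mem_univ z)
      have hMmB : Mm ≤ M0 + (C + ε) * m := hms xm
      -- open set where u' < C + ε
      obtain ⟨U, hUopen, hUeq⟩ := (continuousOn_iff'.1 hu'_cont) (Iio (C + ε)) isOpen_Iio
      -- for each x : a neighborhood O and a δ > 0 with the local estimate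
      have hloc : ∀ x : X, ∃ O : Set X, IsOpen O ∧ x ∈ O ∧ ∃ δ : ℝ, 0 < δ ∧
          ∀ z ∈ O, ∀ lam, m < lam → lam < m + δ → lam ≤ Λ₀ →
            u z lam ≤ Mm + (C + ε) * (lam - m) := by
        intro x
        by_cases hmax : Mm ≤ u x m
        · -- x is a maximizer : u' x m ≤ C < C + ε
          have hxmem : (x, m) ∈ U := by
            have : (x, m) ∈ (fun p : X × ℝ => u' p.1 p.2) ⁻¹' Iio (C + ε) ∩
                univ ×ˢ Icc 0 Λ₀ := by
              refine ⟨?_, mem_univ x, hm0, hmΛ.le⟩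
              have : u' x m ≤ C := hC x m ⟨hm0, hmΛ.le⟩ (fun z => le_trans (hMm z) hmax)
              simpa [mem_preimage] using lt_of_le_of_lt this (by linarith)
            rw [hUeq] at this
            exact this.1
          obtain ⟨O, V, hOopen, hVopen, hxO, hmV, hOV⟩ := isOpen_prod_iff.1 hUopen x m hxmem
          obtain ⟨δ, hδpos, hball⟩ := Metric.isOpen_iff.1 hVopen m hmV
          refine ⟨O, hOopen, hxO, δ, hδpos, ?_⟩
          intro z hzO lam hlam1 hlam2 hlam3
          have hlam0 : (0:ℝ) ≤ lam := le_of_lt (lt_of_le_of_lt hm0 hlam1)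
          -- on (m, lam) the derivative of u z is < C + ε
          have hder : ∀ ξ ∈ Ioo m lam, u' z ξ ≤ C + ε := by
            intro ξ hξ
            have hξK : ξ ∈ Icc (0:ℝ) Λ₀ := ⟨le_trans hm0 hξ.1.le, le_trans hξ.2.le hlam3⟩
            have hξV : ξ ∈ V := by
              apply hball
              rw [Metric.mem_ball, Real.dist_eq, abs_lt]
              constructor <;> [linarith [hξ.1]; linarith [hξ.2]]
            have : (z, ξ) ∈ U ∩ univ ×ˢ Icc 0 Λ₀ := ⟨hOV ⟨hzO, hξV⟩, mem_univ z, hξK⟩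
            rw [← hUeq] at this
            exact le_of_lt this.1
          have hmvt := aux_deriv_bound (f := u z) (f' := u' z) (a := m) (b := lam)
            hlam1.le (fun ξ hξ => (hderiv z ξ (Icc_subset_Icc hm0 hlam3 hξ)).mono
              (Icc_subset_Icc hm0 hlam3)) hder
          calc u z lam ≤ u z m + (C + ε) * (lam - m) := hmvt
            _ ≤ Mm + (C + ε) * (lam - m) := by linarith [hMm z]
        · -- u x m < Mm : stay below the max for a short time
          push_neg at hmax
          set η : ℝ := (Mm - u x m) / 2 with hηdef
          have hηpos : 0 < η := by simp [hηdef]; linarith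
          refine ⟨{z | u z m < Mm - η}, isOpen_lt (hslice m ⟨hm0, hmΛ.le⟩) continuous_const,
            by simp only [mem_setOf_eq]; linarith, η / (|L| + |C + ε| + 1),
            div_pos hηpos (by positivity), ?_⟩
          intro z hzO lam hlam1 hlam2 hlam3
          have hlam0 : (0:ℝ) ≤ lam := le_of_lt (lt_of_le_of_lt hm0 hlam1)
          have hder : ∀ ξ ∈ Ioo m lam, u' z ξ ≤ |L| := by
            intro ξ hξ
            have hξK : ξ ∈ Icc (0:ℝ) Λ₀ := ⟨le_trans hm0 hξ.1.le, le_trans hξ.2.le hlam3⟩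
            exact le_trans (le_trans (le_abs_self _) (hL z ξ hξK)) (le_abs_self L)
          have hmvt := aux_deriv_bound (f := u z) (f' := u' z) (a := m) (b := lam)
            hlam1.le (fun ξ hξ => (hderiv z ξ (Icc_subset_Icc hm0 hlam3 hξ)).mono
              (Icc_subset_Icc hm0 hlam3)) hder
          have hzm : u z m < Mm - η := hzO
          have hd : lam - m < η / (|L| + |C + ε| + 1) := by linarith
          have hpos : (0:ℝ) < |L| + |C + ε| + 1 := by positivity
          have hstep : (|L| + |C + ε|) * (lam - m) ≤ η := by
            have h1 : (|L| + |C + ε|) * (lam - m) ≤ (|L| + |C + ε| + 1) * (lam - m) := by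
              nlinarith
            have h2 : (|L| + |C + ε| + 1) * (lam - m) < η := by
              rw [mul_comm, ← lt_div_iff₀ hpos]; exact hd
            linarith
          have habs : -(C + ε) * (lam - m) ≤ |C + ε| * (lam - m) := by
            nlinarith [neg_abs_le (C + ε)]
          calc u z lam ≤ u z m + |L| * (lam - m) := hmvt
            _ ≤ Mm + (C + ε) * (lam - m) := by nlinarith
      -- extract a finite subcover and a uniform δ
      choose O hOopen hxO δ hδpos hO using hloc
      obtain ⟨t, ht⟩ := isCompact_univ.elim_finite_subcover O hOopen
        (fun x _ => mem_iUnion.2 ⟨x, hxO x⟩)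
      have htne : t.Nonempty := by
        by_contra hte
        rw [Finset.not_nonempty_iff_eq_empty] at hte
        obtain ⟨x⟩ := ‹Nonempty X›
        have := ht (mem_univ x)
        simp [hte] at this
      set δ₀ : ℝ := t.inf' htne δ with hδ₀def
      have hδ₀pos : 0 < δ₀ := by
        rw [hδ₀def, Finset.lt_inf'_iff]
        exact fun x _ => hδpos x
      -- the new point
      set lam : ℝ := min (m + δ₀ / 2) (min y Λ₀) with hlamdef
      have hlam1 : m < lam := by
        rw [hlamdef]
        exact lt_min (by linarith) (lt_min hy hmΛ)
      have hlam2 : lam < m + δ₀ := lt_of_le_of_lt (min_le_left _ _) (by linarith)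
      have hlam3 : lam ≤ Λ₀ := le_trans (min_le_right _ _) (min_le_right _ _)
      have hlamy : lam ≤ y := le_trans (min_le_right _ _) (min_le_left _ _)
      refine ⟨lam, ?_, hlam1, hlamy⟩
      intro z
      obtain ⟨x, hxt, hzx⟩ : ∃ x ∈ t, z ∈ O x := by
        have := ht (mem_univ z)
        simpa using this
      have hδx : δ₀ ≤ δ x := Finset.inf'_le _ hxt
      have := hO x z hzx lam hlam1 (lt_of_lt_of_le hlam2 (by linarith)) hlam3
      calc u z lam ≤ Mm + (C + ε) * (lam - m) := this
        _ ≤ M0 + (C + ε) * m + (C + ε) * (lam - m) := by linarith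
        _ = M0 + (C + ε) * lam := by ring
    have := hclosed.Icc_subset_of_forall_exists_gt h0 hgt
    intro lam hlam x
    exact this hlam x
  -- let ε → 0
  intro x lam hlam
  have h2 : ∀ ε : ℝ, 0 < ε → u x lam ≤ M0 + C * lam + ε := by
    intro ε hε
    rcases eq_or_lt_of_le hlam.1 with h | h
    · have := key ε hε lam hlam x
      rw [← h] at this ⊢
      simpa using le_trans (by simpa using this) (by linarith)
    · have := key (ε / lam) (div_pos hε h) lam hlam x
      have hne : lam ≠ 0 := ne_of_gt h
      calc u x lam ≤ M0 + (C + ε / lam) * lam := this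
        _ = M0 + C * lam + ε := by field_simp; ring
  linarith [le_of_forall_pos_le_add h2]
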